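/- Every triangle-free graph on N vertices has independence number Ω(√(N log N)); consequently, there is a constant c' such that the Ramsey number r(K₄⁻, S_n) satisfies r(K₄⁻, S_n) ≤ c' n² / log n for all large n, where the 3-graph argument is: in a K₄⁻-free 3-uniform hypergraph on N vertices every link graph is triangle-free. -/

import Mathlib

open Finset

private def linkGraph {N : ℕ} (H : Finset (Finset (Fin N))) (x : Fin N) :
    SimpleGraph (Fin N) where
  Adj y z := y ≠ z ∧ ({x, y, z} : Finset (Fin N)) ∈ H
  symm := ⟨fun y z h => ⟨h.1.symm, by have h2 := h.2; rwa [Finset.pair_comm y z] at h2⟩⟩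
  loopless := ⟨fun y h => h.1 rfl⟩

theorem stmt_11 (c : ℝ) (hc : 0 < c)
    -- every triangle-free graph on N vertices has an independent set of size ≥ c·√(N log N)
    (h3n : ∀ (N : ℕ) (G : SimpleGraph (Fin N)), G.CliqueFree 3 →
      ∃ s : Finset (Fin N), (Gᶜ).IsClique (↑s : Set (Fin N)) ∧
        c * Real.sqrt (N * Real.log N) ≤ s.card) :
    ∃ c' : ℝ, 0 < c' ∧ ∃ n₀ : ℕ, ∀ n : ℕ, n₀ ≤ n → ∀ N : ℕ,
      c' * (n : ℝ) ^ 2 / Real.log n ≤ N →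
      ∀ H : Finset (Finset (Fin N)), (∀ e ∈ H, e.card = 3) →
        -- K₄⁻-free: no four vertices span three or more edges
        (∀ S : Finset (Fin N), S.card = 4 →
          ((S.powersetCard 3).filter (· ∈ H)).card ≤ 2) →
        -- the complement contains a copy of the star S_n
        ∃ x : Fin N, ∃ A : Finset (Fin N), x ∉ A ∧ A.card = n - 1 ∧
          ∀ a ∈ A, ∀ b ∈ A, a ≠ b → ({x, a, b} : Finset (Fin N)) ∉ H := by
  refine ⟨max 1 (2 / c ^ 2), lt_max_of_lt_left one_pos, 3, ?_⟩
  intro n hn N hN H hcard hK4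
  set c' : ℝ := max 1 (2 / c ^ 2) with hc'
  have hc'1 : (1 : ℝ) ≤ c' := le_max_left _ _
  have hc'2 : 2 / c ^ 2 ≤ c' := le_max_right _ _
  have hn3 : (3 : ℝ) ≤ n := by exact_mod_cast hn
  have hnpos : (0 : ℝ) < n := by linarith
  -- log n ≥ 1
  have hlogn : (1 : ℝ) ≤ Real.log n := by
    rw [Real.le_log_iff_exp_le hnpos]
    have := Real.exp_one_lt_d9
    linarith
  have hlogpos : (0 : ℝ) < Real.log n := by linarith
  -- log n ≤ n
  have hlogle : Real.log n ≤ n := by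
    have := Real.log_le_sub_one_of_pos hnpos
    linarith
  -- n ≤ N
  have hNn : (n : ℝ) ≤ N := by
    have h1 : (n : ℝ) * Real.log n ≤ c' * n ^ 2 := by nlinarith
    have h2 : (n : ℝ) ≤ c' * n ^ 2 / Real.log n := by
      rw [le_div_iff₀ hlogpos]; linarith
    linarith
  have hNpos : 0 < N := by
    rcases Nat.eq_zero_or_pos N with h | h
    · rw [h] at hNn; norm_num at hNn; linarith
    · exact h
  -- the apex vertex
  set x : Fin N := ⟨0, hNpos⟩ with hx
  set G : SimpleGraph (Fin N) := linkGraph H x with hG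
  -- a vertex appearing in an edge with x is distinct from x
  have hne : ∀ y z : Fin N, ({x, y, z} : Finset (Fin N)) ∈ H → x ≠ y ∧ x ≠ z := by
    intro y z hmem
    have h3 := hcard _ hmem
    constructor
    · intro hxy
      have heq : ({x, y, z} : Finset (Fin N)) = {y, z} := by
        subst hxy; rw [Finset.insert_idem]
      rw [heq] at h3
      have := Finset.card_insert_le y ({z} : Finset (Fin N))
      simp at this; omega
    · intro hxz
      have heq : ({x, y, z} : Finset (Fin N)) = {y, z} := by
        subst hxz
        ext w
        simp only [Finset.mem_insert, Finset.mem_singleton]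
        tauto
      rw [heq] at h3
      have := Finset.card_insert_le y ({z} : Finset (Fin N))
      simp at this; omega
  -- the link graph is triangle-free
  have hfree : G.CliqueFree 3 := by
    intro t ht
    rw [SimpleGraph.is3Clique_iff] at ht
    obtain ⟨a, b, d, hab, had, hbd, -⟩ := ht
    obtain ⟨hab', habH⟩ := (show a ≠ b ∧ ({x, a, b} : Finset (Fin N)) ∈ H from hab)
    obtain ⟨had', hadH⟩ := (show a ≠ d ∧ ({x, a, d} : Finset (Fin N)) ∈ H from had)
    obtain ⟨hbd', hbdH⟩ := (show b ≠ d ∧ ({x, b, d} : Finset (Fin N)) ∈ H from hbd)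
    have hxa : x ≠ a := (hne a b habH).1
    have hxb : x ≠ b := (hne a b habH).2
    have hxd : x ≠ d := (hne a d hadH).2
    -- the 4-set
    have hS : ({x, a, b, d} : Finset (Fin N)).card = 4 := by
      rw [Finset.card_insert_of_notMem (by simp [hxa, hxb, hxd]),
        Finset.card_insert_of_notMem (by simp [hab', had']),
        Finset.card_insert_of_notMem (by simp [hbd']), Finset.card_singleton]
    have hbound := hK4 _ hS
    -- the three edges inside the 4-set
    have hT : ({({x, a, b} : Finset (Fin N)), {x, a, d}, {x, b, d}} :
        Finset (Finset (Fin N))) ⊆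
        (({x, a, b, d} : Finset (Fin N)).powersetCard 3).filter (· ∈ H) := by
      intro e he
      simp only [Finset.mem_insert, Finset.mem_singleton] at he
      rw [Finset.mem_filter, Finset.mem_powersetCard]
      rcases he with rfl | rfl | rfl
      · refine ⟨⟨?_, hcard _ habH⟩, habH⟩
        intro w hw; simp at hw ⊢; tauto
      · refine ⟨⟨?_, hcard _ hadH⟩, hadH⟩
        intro w hw; simp at hw ⊢; tauto
      · refine ⟨⟨?_, hcard _ hbdH⟩, hbdH⟩
        intro w hw; simp at hw ⊢; tauto
    have hne1 : ({x, a, b} : Finset (Fin N)) ≠ {x, a, d} := by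
      intro h
      have hd : d ∈ ({x, a, b} : Finset (Fin N)) := by rw [h]; simp
      simp only [Finset.mem_insert, Finset.mem_singleton] at hd
      rcases hd with h' | h' | h'
      · exact hxd h'.symm
      · exact had' h'.symm
      · exact hbd' h'.symm
    have hne2 : ({x, a, b} : Finset (Fin N)) ≠ {x, b, d} := by
      intro h
      have hd : d ∈ ({x, a, b} : Finset (Fin N)) := by rw [h]; simp
      simp only [Finset.mem_insert, Finset.mem_singleton] at hd
      rcases hd with h' | h' | h'
      · exact hxd h'.symm
      · exact had' h'.symm
      · exact hbd' h'.symm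
    have hne3 : ({x, a, d} : Finset (Fin N)) ≠ {x, b, d} := by
      intro h
      have ha : a ∈ ({x, b, d} : Finset (Fin N)) := by rw [← h]; simp
      simp only [Finset.mem_insert, Finset.mem_singleton] at ha
      rcases ha with h' | h' | h'
      · exact hxa h'.symm
      · exact hab' h'
      · exact had' h'
    have hTcard : ({({x, a, b} : Finset (Fin N)), {x, a, d}, {x, b, d}} :
        Finset (Finset (Fin N))).card = 3 := by
      rw [Finset.card_insert_of_notMem (by simp [hne1, hne2]),
        Finset.card_insert_of_notMem (by simp [hne3]), Finset.card_singleton]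
    have := Finset.card_le_card hT
    omega
  -- get the independent set
  obtain ⟨s, hsclique, hscard⟩ := h3n N G hfree
  -- n ≤ c * sqrt (N log N)
  have hlogNn : Real.log n ≤ Real.log N := Real.log_le_log hnpos hNn
  have hlogN1 : (1 : ℝ) ≤ Real.log N := le_trans hlogn hlogNn
  have hkey : (n : ℝ) ^ 2 ≤ c ^ 2 * (N * Real.log N) := by
    have hNlb : 2 / c ^ 2 * (n : ℝ) ^ 2 / Real.log n ≤ N := by
      refine le_trans ?_ hN
      gcongr
    have ht0 : (0 : ℝ) ≤ 2 / c ^ 2 * (n : ℝ) ^ 2 / Real.log n := by positivity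
    have h1 : (2 / c ^ 2 * (n : ℝ) ^ 2 / Real.log n) * Real.log n ≤ N * Real.log N :=
      mul_le_mul hNlb hlogNn hlogpos.le (Nat.cast_nonneg N)
    have h2 : (2 / c ^ 2 * (n : ℝ) ^ 2 / Real.log n) * Real.log n
        = 2 / c ^ 2 * (n : ℝ) ^ 2 := by
      field_simp
      try ring
    rw [h2] at h1
    have hc2 : (0 : ℝ) < c ^ 2 := by positivity
    have h3 : 2 * (n : ℝ) ^ 2 ≤ c ^ 2 * (N * Real.log N) := by
      have := mul_le_mul_of_nonneg_left h1 hc2.le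
      calc 2 * (n : ℝ) ^ 2 = c ^ 2 * (2 / c ^ 2 * (n : ℝ) ^ 2) := by field_simp; try ring
        _ ≤ c ^ 2 * (N * Real.log N) := this
    linarith [sq_nonneg (n : ℝ)]
  have hle : (n : ℝ) ≤ c * Real.sqrt (N * Real.log N) := by
    have h1 : Real.sqrt ((n : ℝ) ^ 2) ≤ Real.sqrt (c ^ 2 * (N * Real.log N)) :=
      Real.sqrt_le_sqrt hkey
    rwa [Real.sqrt_sq hnpos.le, Real.sqrt_mul (sq_nonneg c),
      Real.sqrt_sq hc.le] at h1
  have hscard' : n ≤ s.card := by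
    have : (n : ℝ) ≤ (s.card : ℝ) := le_trans hle hscard
    exact_mod_cast this
  -- extract the star set
  have herase : n - 1 ≤ (s.erase x).card := by
    have := Finset.pred_card_le_card_erase (s := s) (a := x)
    omega
  obtain ⟨A, hAs, hAcard⟩ := Finset.exists_subset_card_eq herase
  refine ⟨x, A, ?_, hAcard, ?_⟩
  · intro hxA
    exact Finset.notMem_erase x s (hAs hxA)
  · intro a ha b hb hab hmem
    have has : a ∈ s := Finset.mem_of_mem_erase (hAs ha)
    have hbs : b ∈ s := Finset.mem_of_mem_erase (hAs hb)
    have hadj := hsclique has hbs hab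
    rw [SimpleGraph.compl_adj] at hadj
    exact hadj.2 ⟨hab, hmem⟩
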